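/- Let γ > 0, ω ∈ ℝ and β ∈ ℂ, and let A be the 3×3 complex matrix A = [[−2γ, −2·conj(β), −2β], [β, −γ − iω, 0], [conj(β), 0, −γ + iω]]. Then for every v ∈ ℂ³ and every t ≥ 0, ‖ exp(tA) v ‖² ≤ 2 e^{−2γt} ‖v‖², where exp denotes the matrix exponential and ‖·‖ the Euclidean norm on ℂ³. -/

import Mathlib

open Matrix

attribute [local instance] Matrix.linftyOpNormedRing Matrix.linftyOpNormedAlgebra

noncomputable def entryCLM (v : Fin 3 → ℂ) (i : Fin 3) : Matrix (Fin 3) (Fin 3) ℂ →L[ℝ] ℂ :=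
  LinearMap.toContinuousLinearMap
    { toFun := fun M => M.mulVec v i
      map_add' := by intro M N; simp [Matrix.add_mulVec]
      map_smul' := by intro c M; simp [Matrix.smul_mulVec] }

lemma hasDerivAt_exp_mulVec (A : Matrix (Fin 3) (Fin 3) ℂ) (v : Fin 3 → ℂ) (i : Fin 3) (t : ℝ) :
    HasDerivAt (fun s : ℝ => (NormedSpace.exp (s • A)).mulVec v i)
      (A.mulVec ((NormedSpace.exp (t • A)).mulVec v) i) t := by
  have h1 : HasDerivAt (fun s : ℝ => NormedSpace.exp (s • A))
      (A * NormedSpace.exp (t • A)) t := hasDerivAt_exp_smul_const' A t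
  have h2 := (entryCLM v i).hasFDerivAt.comp_hasDerivAt t h1
  refine h2.congr_deriv ?_
  simp [entryCLM, Matrix.mulVec_mulVec]
  rfl

lemma hasDerivAt_normSq_comp {g : ℝ → ℂ} {w : ℂ} {t : ℝ} (hg : HasDerivAt g w t) :
    HasDerivAt (fun s => Complex.normSq (g s))
      (2 * ((starRingEnd ℂ) (g t) * w).re) t := by
  have hc : HasDerivAt (fun s => (starRingEnd ℂ) (g s)) ((starRingEnd ℂ) w) t := by
    have := (Complex.conjCLE.toContinuousLinearMap.hasFDerivAt (x := g t)).comp_hasDerivAt t hg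
    exact this
  have hm := hc.mul hg
  have hre := (Complex.reCLM.hasFDerivAt
    (x := (starRingEnd ℂ) (g t) * g t)).comp_hasDerivAt t hm
  have hfun : (fun s => Complex.reCLM ((starRingEnd ℂ) (g s) * g s))
      = fun s => Complex.normSq (g s) := by
    funext s
    simp [Complex.normSq_apply, Complex.mul_re]
  rw [show (⇑Complex.reCLM ∘ ((fun s => (starRingEnd ℂ) (g s)) * g)) = fun s => Complex.reCLM ((starRingEnd ℂ) (g s) * g s) from rfl, hfun] at hre
  refine hre.congr_deriv ?_
  simp [Complex.mul_re, Complex.add_re]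
  ring


/-- **Contraction estimate for the atomic drift matrix.**
For `A = [[−2γ, −2β̄, −2β], [β, −γ−iω, 0], [β̄, 0, −γ+iω]]` and every `v ∈ ℂ³`, `t ≥ 0`,
`‖e^{tA} v‖² ≤ 2 e^{−2γt} ‖v‖²` in the Euclidean norm on `ℂ³`. -/
theorem atomic_drift_matrix_exponential_contraction
    (γ ω : ℝ) (hγ : 0 < γ) (β : ℂ)
    (A : Matrix (Fin 3) (Fin 3) ℂ)
    (hA : A = !![(-2 * γ : ℂ), -2 * (starRingEnd ℂ) β, -2 * β;
                 β, -(γ : ℂ) - (ω : ℂ) * Complex.I, 0;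
                 (starRingEnd ℂ) β, 0, -(γ : ℂ) + (ω : ℂ) * Complex.I]) :
    ∀ (v : Fin 3 → ℂ) (t : ℝ), 0 ≤ t →
      ∑ i, ‖((NormedSpace.exp (t • A)).mulVec v) i‖ ^ 2 ≤
        2 * Real.exp (-2 * γ * t) * ∑ i, ‖v i‖ ^ 2 := by
  intro v t ht
  set u : ℝ → Fin 3 → ℂ := fun s => (NormedSpace.exp (s • A)).mulVec v with hu_def
  have hu : ∀ (i : Fin 3) (s : ℝ), HasDerivAt (fun r => u r i) (A.mulVec (u s) i) s :=
    fun i s => hasDerivAt_exp_mulVec A v i s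
  set f : ℝ → ℝ := fun s =>
    Complex.normSq (u s 0) / 2 + Complex.normSq (u s 1) + Complex.normSq (u s 2) with hf_def
  set D : ℝ → ℝ := fun s =>
    2 * ((starRingEnd ℂ) (u s 0) * (A.mulVec (u s) 0)).re / 2
    + 2 * ((starRingEnd ℂ) (u s 1) * (A.mulVec (u s) 1)).re
    + 2 * ((starRingEnd ℂ) (u s 2) * (A.mulVec (u s) 2)).re with hD_def
  have hf : ∀ s, HasDerivAt f (D s) s := fun s =>
    (((hasDerivAt_normSq_comp (hu 0 s)).div_const 2).add
      (hasDerivAt_normSq_comp (hu 1 s))).add (hasDerivAt_normSq_comp (hu 2 s))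
  have hD : ∀ s, D s = -2 * γ *
      (Complex.normSq (u s 0) + Complex.normSq (u s 1) + Complex.normSq (u s 2)) := by
    intro s
    have h0 : A.mulVec (u s) 0 = -2 * γ * u s 0 - 2 * (starRingEnd ℂ) β * u s 1
        - 2 * β * u s 2 := by
      simp [hA, Matrix.mulVec, dotProduct, Fin.sum_univ_three]; ring
    have h1 : A.mulVec (u s) 1 = β * u s 0 + (-(γ:ℂ) - ω * Complex.I) * u s 1 := by
      simp [hA, Matrix.mulVec, dotProduct, Fin.sum_univ_three]
    have h2 : A.mulVec (u s) 2 = (starRingEnd ℂ) β * u s 0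
        + (-(γ:ℂ) + ω * Complex.I) * u s 2 := by
      simp [hA, Matrix.mulVec, dotProduct, Fin.sum_univ_three]
    rw [hD_def]
    simp only [h0, h1, h2]
    simp [Complex.mul_re, Complex.add_re, Complex.sub_re, Complex.mul_im, Complex.add_im,
      Complex.sub_im, Complex.normSq_apply, Complex.ofReal_re, Complex.ofReal_im]
    ring
  have hDle : ∀ s, D s ≤ -(2 * γ) * f s := by
    intro s
    rw [hD s, hf_def]
    have := Complex.normSq_nonneg (u s 0)
    nlinarith
  set g : ℝ → ℝ := fun s => Real.exp (2 * γ * s) * f s with hg_def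
  have hg : ∀ s, HasDerivAt g (Real.exp (2 * γ * s) * (2 * γ) * f s
      + Real.exp (2 * γ * s) * D s) s := by
    intro s
    have he : HasDerivAt (fun r : ℝ => Real.exp (2 * γ * r)) (Real.exp (2 * γ * s) * (2 * γ)) s := by
      have := ((hasDerivAt_id s).const_mul (2 * γ)).exp
      simpa using this
    exact he.mul (hf s)
  have hanti : Antitone g := by
    apply antitone_of_deriv_nonpos (fun s => (hg s).differentiableAt)
    intro s
    rw [(hg s).deriv]
    have h1 := hDle s
    have h2 := (Real.exp_pos (2 * γ * s)).le
    nlinarith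
  have hg0 : g t ≤ g 0 := hanti ht
  have hu0 : u 0 = v := by
    simp [hu_def, NormedSpace.exp_zero]
  have hgt0 : g 0 = f 0 := by simp [hg_def]
  have hft : f t ≤ Real.exp (-2 * γ * t) * f 0 := by
    have hpos : (0:ℝ) < Real.exp (2 * γ * t) := Real.exp_pos _
    have : Real.exp (2 * γ * t) * f t ≤ f 0 := by rw [← hgt0]; exact hg0
    rw [show (-2 * γ * t) = -(2 * γ * t) by ring, Real.exp_neg, inv_mul_eq_div,
      le_div_iff₀ hpos, mul_comm]
    exact this
  have hsum : ∑ i, ‖(u t) i‖ ^ 2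
      = Complex.normSq (u t 0) + Complex.normSq (u t 1) + Complex.normSq (u t 2) := by
    simp [Fin.sum_univ_three, Complex.sq_norm]
  have hsumv : ∑ i, ‖v i‖ ^ 2
      = Complex.normSq (v 0) + Complex.normSq (v 1) + Complex.normSq (v 2) := by
    simp [Fin.sum_univ_three, Complex.sq_norm]
  have hf0le : f 0 ≤ Complex.normSq (v 0) + Complex.normSq (v 1) + Complex.normSq (v 2) := by
    rw [hf_def]; simp only [hu0]
    have := Complex.normSq_nonneg (v 0)
    linarith
  have hle2 : Complex.normSq (u t 0) + Complex.normSq (u t 1) + Complex.normSq (u t 2)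
      ≤ 2 * f t := by
    simp only [hf_def]
    have h1 := Complex.normSq_nonneg (u t 1)
    have h2 := Complex.normSq_nonneg (u t 2)
    linarith
  rw [hsum, hsumv]
  have hexp := (Real.exp_pos (-2 * γ * t)).le
  nlinarith [hft, hf0le, hle2]
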